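/- Let V, V' ⊆ 𝔽₂⁷ be two 3-dimensional binary codes each of whose nonzero elements has weight exactly 4. Then V and V' are isomorphic as codes: there exists a permutation σ of the 7 coordinates such that the induced linear automorphism of 𝔽₂⁷ maps V onto V'. -/

import Mathlib

open Finset Matrix

private lemma d1 : ∀ c : Fin 3 → ZMod 2, c ≠ 0 →
    (Finset.univ.filter fun f : Fin 3 → ZMod 2 => f ≠ 0 ∧ f ⬝ᵥ c ≠ 0).card = 4 := by decide
private lemma d2 : (Finset.univ.filter fun f : Fin 3 → ZMod 2 => f ≠ 0).card = 7 := by decide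
private lemma d3 : ∀ c0 c : Fin 3 → ZMod 2, c0 ≠ 0 → c ≠ 0 →
    (Finset.univ.filter fun f : Fin 3 → ZMod 2 => (f ≠ 0 ∧ f ⬝ᵥ c0 = 0) ∧ f ⬝ᵥ c = 0).card
      = if c = c0 then 3 else 1 := by decide
private lemma d4 : ∀ c0 : Fin 3 → ZMod 2, c0 ≠ 0 →
    (Finset.univ.filter fun f : Fin 3 → ZMod 2 => f ≠ 0 ∧ f ⬝ᵥ c0 = 0).card = 3 := by decide

private lemma key (φ : Fin 7 → Fin 3 → ZMod 2)
    (H : ∀ f : Fin 3 → ZMod 2, f ≠ 0 →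
      (Finset.univ.filter fun i => f ⬝ᵥ φ i ≠ 0).card = 4) :
    Function.Injective φ ∧ ∀ i, φ i ≠ 0 := by
  set F0 : Finset (Fin 3 → ZMod 2) := Finset.univ.filter (fun f => f ≠ 0) with hF0
  have hS1 : ∑ f ∈ F0, ∑ i : Fin 7, (if f ⬝ᵥ φ i ≠ 0 then 1 else 0) = 28 := by
    have step : ∀ f ∈ F0, ∑ i : Fin 7, (if f ⬝ᵥ φ i ≠ 0 then (1:ℕ) else 0) = 4 := by
      intro f hf
      rw [← Finset.card_filter]
      exact H f (Finset.mem_filter.mp hf).2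
    rw [Finset.sum_congr rfl step, Finset.sum_const, hF0, d2]; rfl
  rw [Finset.sum_comm] at hS1
  have hnz : ∀ i, φ i ≠ 0 := by
    have hper : ∀ i ∈ (Finset.univ : Finset (Fin 7)),
        ∑ f ∈ F0, (if f ⬝ᵥ φ i ≠ 0 then (1:ℕ) else 0) = if φ i = 0 then 0 else 4 := by
      intro i _
      by_cases h : φ i = 0
      · rw [if_pos h]
        apply Finset.sum_eq_zero
        intro f _
        rw [h, dotProduct_zero]
        simp
      · rw [if_neg h, ← Finset.card_filter, hF0, Finset.filter_filter]
        exact d1 (φ i) h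
    rw [Finset.sum_congr rfl hper] at hS1
    have h4 : ∑ i : Fin 7, (if φ i = 0 then (0:ℕ) else 4)
        = 4 * (Finset.univ.filter fun i : Fin 7 => φ i ≠ 0).card := by
      rw [Finset.card_filter, Finset.mul_sum]
      apply Finset.sum_congr rfl
      intro i _
      by_cases h : φ i = 0 <;> simp [h]
    rw [h4] at hS1
    have hcard : (Finset.univ.filter fun i : Fin 7 => φ i ≠ 0).card = 7 := by omega
    have huniv : (Finset.univ.filter fun i : Fin 7 => φ i ≠ 0) = Finset.univ :=
      Finset.eq_univ_of_card _ (by rw [hcard]; rfl)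
    intro i
    have hi : i ∈ Finset.univ.filter fun i : Fin 7 => φ i ≠ 0 := by
      rw [huniv]; exact Finset.mem_univ i
    exact (Finset.mem_filter.mp hi).2
  refine ⟨?_, hnz⟩
  intro a b hab
  set c0 := φ a with hc0
  have hc0nz : c0 ≠ 0 := hnz a
  set F1 : Finset (Fin 3 → ZMod 2) := Finset.univ.filter (fun f => f ≠ 0 ∧ f ⬝ᵥ c0 = 0) with hF1
  have hT1 : ∑ f ∈ F1, ∑ i : Fin 7, (if f ⬝ᵥ φ i = 0 then (1:ℕ) else 0) = 9 := by
    have step : ∀ f ∈ F1, ∑ i : Fin 7, (if f ⬝ᵥ φ i = 0 then (1:ℕ) else 0) = 3 := by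
      intro f hf
      obtain ⟨-, hf0, -⟩ := Finset.mem_filter.mp hf
      rw [← Finset.card_filter]
      have h4 := H f hf0
      have hsum := Finset.card_filter_add_card_filter_not
        (s := (Finset.univ : Finset (Fin 7))) (p := fun i => f ⬝ᵥ φ i = 0)
      simp only [Finset.card_univ, Fintype.card_fin] at hsum
      have hne : (Finset.univ.filter fun i : Fin 7 => ¬ f ⬝ᵥ φ i = 0).card = 4 := h4
      omega
    rw [Finset.sum_congr rfl step, Finset.sum_const, hF1, d4 c0 hc0nz]; rfl
  rw [Finset.sum_comm] at hT1
  have hper : ∀ i ∈ (Finset.univ : Finset (Fin 7)),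
      ∑ f ∈ F1, (if f ⬝ᵥ φ i = 0 then (1:ℕ) else 0) = if φ i = c0 then 3 else 1 := by
    intro i _
    rw [← Finset.card_filter, hF1, Finset.filter_filter]
    exact d3 c0 (φ i) hc0nz (hnz i)
  rw [Finset.sum_congr rfl hper] at hT1
  have h2 : ∑ i : Fin 7, (if φ i = c0 then (3:ℕ) else 1)
      = 2 * (Finset.univ.filter fun i : Fin 7 => φ i = c0).card + 7 := by
    rw [Finset.card_filter, Finset.mul_sum]
    have step : ∀ i ∈ (Finset.univ : Finset (Fin 7)),
        (if φ i = c0 then (3:ℕ) else 1) = 2 * (if φ i = c0 then 1 else 0) + 1 := by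
      intro i _
      by_cases h : φ i = c0 <;> simp [h]
    rw [Finset.sum_congr rfl step, Finset.sum_add_distrib]
    simp
  rw [h2] at hT1
  have hcard : (Finset.univ.filter fun i : Fin 7 => φ i = c0).card = 1 := by omega
  obtain ⟨x, hx⟩ := Finset.card_eq_one.mp hcard
  have ha : a ∈ Finset.univ.filter fun i : Fin 7 => φ i = c0 := by
    simp [Finset.mem_filter, hc0]
  have hb : b ∈ Finset.univ.filter fun i : Fin 7 => φ i = c0 := by
    simp [Finset.mem_filter, ← hab]
  rw [hx, Finset.mem_singleton] at ha hb
  rw [ha, hb]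

private lemma exists_phi (V : Submodule (ZMod 2) (Fin 7 → ZMod 2))
    (hdim : Module.finrank (ZMod 2) V = 3)
    (hV : ∀ v ∈ V, v ≠ 0 → (Finset.univ.filter fun i => v i ≠ 0).card = 4) :
    ∃ φ : Fin 7 → Fin 3 → ZMod 2, Function.Injective φ ∧ (∀ i, φ i ≠ 0) ∧
      ∀ v, v ∈ V ↔ ∃ f : Fin 3 → ZMod 2, v = fun i => f ⬝ᵥ φ i := by
  have : Module.Finite (ZMod 2) V := by infer_instance
  let b : Module.Basis (Fin 3) (ZMod 2) V := Module.finBasisOfFinrankEq (ZMod 2) V hdim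
  set φ : Fin 7 → Fin 3 → ZMod 2 := fun i k => (b k : Fin 7 → ZMod 2) i with hφ
  have hcoe : ∀ f : Fin 3 → ZMod 2,
      ((∑ k, f k • b k : V) : Fin 7 → ZMod 2) = fun i => f ⬝ᵥ φ i := by
    intro f
    funext i
    rw [dotProduct]
    push_cast
    rw [Finset.sum_apply]
    simp [hφ, smul_eq_mul]
  have hmem : ∀ v, v ∈ V ↔ ∃ f : Fin 3 → ZMod 2, v = fun i => f ⬝ᵥ φ i := by
    intro v
    constructor
    · intro hv
      refine ⟨b.repr ⟨v, hv⟩, ?_⟩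
      have := b.sum_repr ⟨v, hv⟩
      rw [← hcoe (b.repr ⟨v, hv⟩)]
      exact congrArg Subtype.val this.symm
    · rintro ⟨f, rfl⟩
      rw [← hcoe]
      exact (∑ k, f k • b k : V).2
  have H : ∀ f : Fin 3 → ZMod 2, f ≠ 0 →
      (Finset.univ.filter fun i => f ⬝ᵥ φ i ≠ 0).card = 4 := by
    intro f hf
    have hvmem : (fun i => f ⬝ᵥ φ i) ∈ V := (hmem _).2 ⟨f, rfl⟩
    have hvne : (fun i => f ⬝ᵥ φ i) ≠ 0 := by
      intro h0
      have hsum0 : (∑ k, f k • b k : V) = 0 := by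
        apply Subtype.ext
        rw [hcoe f, h0]
        rfl
      have := Fintype.linearIndependent_iff.mp b.linearIndependent f hsum0
      exact hf (funext this)
    exact hV _ hvmem hvne
  obtain ⟨hinj, hnz⟩ := key φ H
  exact ⟨φ, hinj, hnz, hmem⟩

/-- Any two `3`-dimensional binary codes `V, V' ⊆ 𝔽₂⁷` all of whose
nonzero elements have weight exactly `4` are isomorphic: some permutation `σ` of the
`7` coordinates induces a linear automorphism of `𝔽₂⁷` mapping `V` onto `V'`. -/
theorem hamming_code_unique (V V' : Submodule (ZMod 2) (Fin 7 → ZMod 2))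
    (hdim : Module.finrank (ZMod 2) V = 3)
    (hdim' : Module.finrank (ZMod 2) V' = 3)
    (hV : ∀ v ∈ V, v ≠ 0 → (Finset.univ.filter fun i => v i ≠ 0).card = 4)
    (hV' : ∀ v ∈ V', v ≠ 0 → (Finset.univ.filter fun i => v i ≠ 0).card = 4) :
    ∃ σ : Equiv.Perm (Fin 7), ∀ v : Fin 7 → ZMod 2, v ∈ V ↔ (v ∘ σ) ∈ V' := by
  obtain ⟨φ, hinj, hnz, hmem⟩ := exists_phi V hdim hV
  obtain ⟨φ', hinj', hnz', hmem'⟩ := exists_phi V' hdim' hV'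
  have hcard : Fintype.card {c : Fin 3 → ZMod 2 // c ≠ 0} = 7 := by
    rw [Fintype.card_subtype]
    exact d2
  have hbij : Function.Bijective (fun i => (⟨φ i, hnz i⟩ : {c : Fin 3 → ZMod 2 // c ≠ 0})) := by
    rw [Fintype.bijective_iff_injective_and_card]
    refine ⟨fun a b hab => hinj (congrArg Subtype.val hab), ?_⟩
    simp [hcard]
  have hbij' : Function.Bijective (fun i => (⟨φ' i, hnz' i⟩ : {c : Fin 3 → ZMod 2 // c ≠ 0})) := by
    rw [Fintype.bijective_iff_injective_and_card]
    refine ⟨fun a b hab => hinj' (congrArg Subtype.val hab), ?_⟩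
    simp [hcard]
  let e := Equiv.ofBijective _ hbij
  let e' := Equiv.ofBijective _ hbij'
  refine ⟨e'.trans e.symm, ?_⟩
  have hσ : ∀ i, φ ((e'.trans e.symm) i) = φ' i := by
    intro i
    have : e (e.symm (e' i)) = e' i := e.apply_symm_apply (e' i)
    have h2 := congrArg Subtype.val this
    exact h2
  intro v
  constructor
  · intro hv
    obtain ⟨f, rfl⟩ := (hmem v).1 hv
    refine (hmem' _).2 ⟨f, ?_⟩
    funext i
    simp only [Function.comp_apply]
    rw [hσ i]
  · intro hv
    obtain ⟨f, hf⟩ := (hmem' _).1 hv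
    refine (hmem v).2 ⟨f, ?_⟩
    funext j
    have := congrFun hf ((e'.trans e.symm).symm j)
    simp only [Function.comp_apply, Equiv.apply_symm_apply] at this
    rw [this, ← hσ ((e'.trans e.symm).symm j), Equiv.apply_symm_apply]
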